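/- Let q be an odd prime power, n odd, and α a non-square in F_q. The number of isotropic points of PG(n,q) with respect to Q(x_0,...,x_n) = x_0^2 - x_1^2 + x_2^2 - ... + (-1)^n α x_n^2 equals q^{n-1} + q^{n-2} + ... + q + 1 - q^{(n-1)/2}. -/

import Mathlib

/-- The quadratic form `Q(x) = x₀² - x₁² + x₂² - ⋯ + (-1)ⁿ α xₙ²` on `F^{n+1}`. -/
def Qn (F : Type) [Field F] (n : ℕ) (α : F) (v : Fin (n + 1) → F) : F :=
  ∑ i : Fin (n + 1), (-1 : F) ^ (i : ℕ) * (if (i : ℕ) = n then α else 1) * v i ^ 2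

namespace Stmt3Aux

open Finset

open scoped Classical

variable {F : Type} [Field F] [Fintype F]

lemma two_ne_zero' (hodd : Odd (Fintype.card F)) : (2 : F) ≠ 0 := by
  intro h
  have hd : ringChar F ∣ 2 := (ringChar.spec F 2).mp (by exact_mod_cast h)
  have h2 : ringChar F = 2 := by
    rcases (Nat.dvd_prime Nat.prime_two).mp hd with h1 | h2
    · exfalso
      have := (ringChar.spec F 1).mpr (h1 ▸ dvd_refl _)
      simpa using this
    · exact h2
  have := FiniteField.even_card_iff_char_two.mp h2
  rw [Nat.odd_iff] at hodd
  omega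

/-- Counting `(x, y)` with `x * y = b`. -/
lemma card_mul_pair (b : F) :
    Fintype.card {p : F × F // p.1 * p.2 = b} + 1 =
      if b = 0 then 2 * Fintype.card F else Fintype.card F := by
  classical
  split_ifs with hb
  · subst hb
    rw [Fintype.card_subtype]
    have hset : (univ.filter (fun p : F × F => p.1 * p.2 = 0)) =
        ({0} ×ˢ univ) ∪ (univ ×ˢ {0}) := by
      ext ⟨x, y⟩
      simp [mul_eq_zero, or_comm, eq_comm]
    rw [hset]
    have := Finset.card_union_add_card_inter (({0} : Finset F) ×ˢ (univ : Finset F))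
      ((univ : Finset F) ×ˢ ({0} : Finset F))
    have hinter : (({0} : Finset F) ×ˢ (univ : Finset F)) ∩
        ((univ : Finset F) ×ˢ ({0} : Finset F)) = ({0} : Finset F) ×ˢ ({0} : Finset F) := by
      ext ⟨x, y⟩
      simp [Prod.ext_iff, eq_comm]
    rw [hinter] at this
    simp only [Finset.card_product, Finset.card_singleton, Finset.card_univ] at this ⊢
    omega
  · have hne : ∀ p : {p : F × F // p.1 * p.2 = b}, p.1.1 ≠ 0 := by
      intro p h
      apply hb
      rw [← p.2, h, zero_mul]
    have e : {p : F × F // p.1 * p.2 = b} ≃ Fˣ :=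
      { toFun := fun p => Units.mk0 p.1.1 (hne p)
        invFun := fun u => ⟨(u, (u : F)⁻¹ * b), by
          rw [← mul_assoc, mul_inv_cancel₀ u.ne_zero, one_mul]⟩
        left_inv := by
          intro p
          apply Subtype.ext
          apply Prod.ext
          · rfl
          · simp only [Units.val_mk0]
            have hx := hne p
            field_simp
            linear_combination (-1 : F) * p.2
        right_inv := by
          intro u
          apply Units.ext
          rfl }
    rw [Fintype.card_congr e, Fintype.card_units]
    have : 0 < Fintype.card F := Fintype.card_pos
    omega

/-- The change of variables `(u, v) ↦ ((u+v)/2, (u-v)/2)`. -/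
def halfEquiv (h2 : (2 : F) ≠ 0) : F × F ≃ F × F :=
  { toFun := fun p => ((p.1 + p.2) / 2, (p.1 - p.2) / 2)
    invFun := fun p => (p.1 + p.2, p.1 - p.2)
    left_inv := fun p => by
      apply Prod.ext <;> field_simp <;> ring
    right_inv := fun p => by
      apply Prod.ext <;> field_simp <;> ring }

/-- Counting `(x, y)` with `x² - y² = b`, for characteristic not two. -/
lemma card_sq_pair (h2 : (2 : F) ≠ 0) (b : F) :
    Fintype.card {p : F × F // p.1 ^ 2 - p.2 ^ 2 = b} + 1 =
      if b = 0 then 2 * Fintype.card F else Fintype.card F := by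
  classical
  have e : {p : F × F // p.1 * p.2 = b} ≃ {p : F × F // p.1 ^ 2 - p.2 ^ 2 = b} := by
    refine Equiv.subtypeEquiv (halfEquiv h2) ?_
    intro p
    have hh : ((p.1 + p.2) / 2) ^ 2 - ((p.1 - p.2) / 2) ^ 2 = p.1 * p.2 := by
      field_simp
      ring
    show p.1 * p.2 = b ↔ ((p.1 + p.2) / 2) ^ 2 - ((p.1 - p.2) / 2) ^ 2 = b
    rw [hh]
  rw [← Fintype.card_congr e]
  exact card_mul_pair b

/-- Splitting off the first two coordinates. -/
def peelEquiv (m : ℕ) : (Fin (m + 2) → F) ≃ (Fin m → F) × F × F where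
  toFun v := (fun j => v j.succ.succ, v 0, v 1)
  invFun t := Fin.cons t.2.1 (Fin.cons t.2.2 t.1)
  left_inv v := by
    funext i
    refine Fin.cases ?_ (fun i => ?_) i
    · simp
    · refine Fin.cases ?_ (fun i => ?_) i
      · simp [Fin.succ_zero_eq_one]
      · simp
  right_inv t := by
    obtain ⟨w, x, y⟩ := t
    refine Prod.ext ?_ (Prod.ext ?_ ?_)
    · funext j
      simp
    · simp
    · simp [Fin.cons_one]

/-- The recursion step: adding a hyperbolic plane. -/
lemma step_count (h2 : (2 : F) ≠ 0) (m : ℕ) (g : (Fin m → F) → F) :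
    Fintype.card {v : Fin (m + 2) → F //
        v 0 ^ 2 - v 1 ^ 2 + g (fun j => v j.succ.succ) = 0} + Fintype.card F ^ m
      = Fintype.card F ^ (m + 1)
        + Fintype.card F * Fintype.card {w : Fin m → F // g w = 0} := by
  classical
  set q := Fintype.card F with hq
  have e : {v : Fin (m + 2) → F // v 0 ^ 2 - v 1 ^ 2 + g (fun j => v j.succ.succ) = 0}
      ≃ {t : (Fin m → F) × F × F // t.2.1 ^ 2 - t.2.2 ^ 2 + g t.1 = 0} := by
    refine Equiv.subtypeEquiv (peelEquiv m) ?_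
    intro v
    rfl
  rw [Fintype.card_congr e]
  have hsum : Fintype.card {t : (Fin m → F) × F × F // t.2.1 ^ 2 - t.2.2 ^ 2 + g t.1 = 0}
      = ∑ w : Fin m → F, Fintype.card {p : F × F // p.1 ^ 2 - p.2 ^ 2 = -(g w)} := by
    rw [Fintype.card_subtype, Finset.card_filter, Fintype.sum_prod_type]
    refine Finset.sum_congr rfl fun w _ => ?_
    rw [Fintype.card_subtype, Finset.card_filter]
    refine Finset.sum_congr rfl fun p _ => ?_
    congr 1
    simp [eq_neg_iff_add_eq_zero]
  rw [hsum]
  have hcard : ∀ w : Fin m → F,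
      Fintype.card {p : F × F // p.1 ^ 2 - p.2 ^ 2 = -(g w)} + 1
        = if g w = 0 then 2 * q else q := by
    intro w
    rw [card_sq_pair h2]
    simp [neg_eq_zero, ← hq]
  have hW : Fintype.card (Fin m → F) = q ^ m := by
    simp [hq]
  calc (∑ w : Fin m → F, Fintype.card {p : F × F // p.1 ^ 2 - p.2 ^ 2 = -(g w)}) + q ^ m
      = ∑ w : Fin m → F,
          (Fintype.card {p : F × F // p.1 ^ 2 - p.2 ^ 2 = -(g w)} + 1) := by
        rw [Finset.sum_add_distrib]
        simp [hW]
    _ = ∑ w : Fin m → F, (if g w = 0 then 2 * q else q) := by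
        exact Finset.sum_congr rfl fun w _ => hcard w
    _ = ∑ w : Fin m → F, (q + if g w = 0 then q else 0) := by
        refine Finset.sum_congr rfl fun w _ => ?_
        split_ifs <;> ring
    _ = q ^ (m + 1) + q * Fintype.card {w : Fin m → F // g w = 0} := by
        rw [Finset.sum_add_distrib]
        congr 1
        · simp [hW, pow_succ, mul_comm]
        · rw [Fintype.card_subtype, ← Finset.sum_filter]
          rw [Finset.sum_const, smul_eq_mul, mul_comm]

/-- The count of isotropic vectors for the elliptic form in `2k+2` variables. -/
lemma Zcount (h2 : (2 : F) ≠ 0) {α : F} (hα : ¬ IsSquare α) (k : ℕ) :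
    Fintype.card {v : Fin (2 * k + 1 + 1) → F // Qn F (2 * k + 1) α v = 0}
        + Fintype.card F ^ (k + 1)
      = Fintype.card F ^ (2 * k + 1) + Fintype.card F ^ k := by
  classical
  induction k with
  | zero =>
    have huniq : ∀ v : Fin 2 → F, Qn F 1 α v = 0 ↔ v = 0 := by
      intro v
      constructor
      · intro h
        rw [Qn, Fin.sum_univ_two] at h
        norm_num at h
        -- h : v 0 ^ 2 + -(α * v 1 ^ 2) = 0
        have hv1 : v 1 = 0 := by
          by_contra hv1
          apply hα
          refine ⟨v 0 / v 1, ?_⟩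
          field_simp
          linear_combination -h
        have hv0 : v 0 = 0 := by
          have : v 0 ^ 2 = 0 := by
            rw [hv1] at h
            linear_combination h
          exact pow_eq_zero_iff (n := 2) (by norm_num) |>.mp this
        funext i
        fin_cases i <;> simp [hv0, hv1]
      · intro h
        subst h
        simp [Qn]
    have h1 : Fintype.card {v : Fin (2 * 0 + 1 + 1) → F // Qn F (2 * 0 + 1) α v = 0} = 1 := by
      rw [Fintype.card_congr (Equiv.subtypeEquivRight huniq)]
      exact Fintype.card_subtype_eq (0 : Fin 2 → F)
    show Fintype.card {v : Fin (2 * 0 + 1 + 1) → F // Qn F (2 * 0 + 1) α v = 0}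
        + Fintype.card F ^ 1 = Fintype.card F ^ 1 + Fintype.card F ^ 0
    rw [h1, pow_zero]
    exact add_comm 1 _
  | succ k ih =>
    have key : ∀ v : Fin (2 * k + 2 + 2) → F,
        Qn F (2 * (k + 1) + 1) α v
          = v 0 ^ 2 - v 1 ^ 2 + Qn F (2 * k + 1) α (fun j => v j.succ.succ) := by
      intro v
      rw [Qn, Qn, Fin.sum_univ_succ, Fin.sum_univ_succ]
      have c0 : ((-1 : F) ^ ((0 : Fin (2 * (k + 1) + 1 + 1)) : ℕ)
          * (if ((0 : Fin (2 * (k + 1) + 1 + 1)) : ℕ) = 2 * (k + 1) + 1 then α else 1)) = 1 := by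
        norm_num
      have c1 : ((-1 : F) ^ (((0 : Fin (2 * (k + 1) + 1)).succ : Fin (2 * (k+1) + 1 + 1)) : ℕ)
          * (if (((0 : Fin (2 * (k + 1) + 1)).succ :
              Fin (2 * (k+1) + 1 + 1)) : ℕ) = 2 * (k + 1) + 1 then α else 1)) = -1 := by
        have : (((0 : Fin (2 * (k + 1) + 1)).succ : Fin (2 * (k+1) + 1 + 1)) : ℕ) = 1 := rfl
        rw [this, if_neg (by omega)]
        norm_num
      have cj : ∀ j : Fin (2 * k + 2),
          ((-1 : F) ^ ((j.succ.succ : Fin (2 * (k+1) + 1 + 1)) : ℕ)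
            * (if ((j.succ.succ : Fin (2 * (k+1) + 1 + 1)) : ℕ) = 2 * (k + 1) + 1 then α else 1))
          = (-1 : F) ^ (j : ℕ) * (if (j : ℕ) = 2 * k + 1 then α else 1) := by
        intro j
        have hv : ((j.succ.succ : Fin (2 * (k+1) + 1 + 1)) : ℕ) = (j : ℕ) + 2 := by
          simp [Fin.val_succ]
        rw [hv]
        have hiff : ((j : ℕ) + 2 = 2 * (k + 1) + 1) ↔ ((j : ℕ) = 2 * k + 1) := by omega
        rw [if_congr hiff rfl rfl, pow_add]
        ring
      rw [c0]
      rw [c1]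
      rw [Finset.sum_congr rfl (fun j _ => by rw [cj j])]
      have h01 : ((0 : Fin (2 * (k + 1) + 1)).succ : Fin (2 * (k+1) + 1 + 1)) = 1 := by
        simp [Fin.succ_zero_eq_one]
      rw [h01]
      have hsum : ∀ f : Fin (2 * k + 1 + 1) → F,
          (∑ x : Fin (2 * (k + 1)), f x) = ∑ x : Fin (2 * k + 1 + 1), f x := fun f => rfl
      rw [hsum]
      ring
    have ecard : Fintype.card {v : Fin (2 * (k+1) + 1 + 1) → F // Qn F (2 * (k+1) + 1) α v = 0}
        = Fintype.card {v : Fin (2 * k + 2 + 2) → F //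
            v 0 ^ 2 - v 1 ^ 2 + Qn F (2 * k + 1) α (fun j => v j.succ.succ) = 0} := by
      exact Fintype.card_congr (Equiv.subtypeEquivRight (fun v => by rw [key v]))
    rw [ecard]
    have hstep := step_count h2 (2 * k + 2) (fun w => Qn F (2 * k + 1) α w)
    set q := Fintype.card F with hq
    set Z' := Fintype.card {v : Fin (2 * k + 2 + 2) → F //
        v 0 ^ 2 - v 1 ^ 2 + Qn F (2 * k + 1) α (fun j => v j.succ.succ) = 0} with hZ'
    set Z := Fintype.card {w : Fin (2 * k + 1 + 1) → F // Qn F (2 * k + 1) α w = 0} with hZ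
    have hstep' : Z' + q ^ (2 * k + 2) = q ^ (2 * k + 3) + q * Z := hstep
    zify at hstep' ih ⊢
    push_cast at hstep' ih ⊢
    linear_combination hstep' + (q : ℤ) * ih

lemma geom_aux (q : ℕ) (hq1 : 1 ≤ q) (n : ℕ) :
    (q - 1) * (∑ i ∈ Finset.range n, q ^ i) + 1 = q ^ n := by
  induction n with
  | zero => simp
  | succ n ih =>
    rw [Finset.sum_range_succ]
    zify [hq1] at ih ⊢
    linear_combination ih

lemma hom_Qn (n : ℕ) (α : F) (c : F) (v : Fin (n + 1) → F) :
    Qn F n α (c • v) = c ^ 2 * Qn F n α v := by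
  rw [Qn, Qn, Finset.mul_sum]
  refine Finset.sum_congr rfl fun i _ => ?_
  simp only [Pi.smul_apply, smul_eq_mul]
  ring

lemma rep_isotropic (n : ℕ) (α : F) (v : Fin (n + 1) → F) (hv : v ≠ 0)
    (h : Qn F n α v = 0) : Qn F n α (Projectivization.mk F v hv).rep = 0 := by
  obtain ⟨a, ha⟩ := Projectivization.exists_smul_eq_mk_rep F v hv
  rw [← ha, Units.smul_def, hom_Qn, h, mul_zero]

lemma card_proj (n : ℕ) (α : F) :
    Nat.card {P : Projectivization F (Fin (n + 1) → F) // Qn F n α P.rep = 0}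
        * (Fintype.card F - 1) + 1
      = Fintype.card {v : Fin (n + 1) → F // Qn F n α v = 0} := by
  classical
  set S := {P : Projectivization F (Fin (n + 1) → F) // Qn F n α P.rep = 0} with hS
  set T := {v : Fin (n + 1) → F // v ≠ 0 ∧ Qn F n α v = 0} with hT
  -- the quotient map from nonzero isotropic vectors to isotropic points
  let f : T → S := fun t => ⟨Projectivization.mk F t.1 t.2.1, rep_isotropic n α t.1 t.2.1 t.2.2⟩
  -- each fiber is equivalent to `Fˣ`
  have fib : ∀ P : S, Fˣ ≃ {t : T // f t = P} := by
    intro P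
    have hrep := Projectivization.rep_nonzero P.1
    refine Equiv.ofBijective (fun c =>
      ⟨⟨(c : F) • P.1.rep, smul_ne_zero c.ne_zero hrep, by
          rw [hom_Qn, P.2, mul_zero]⟩, ?_⟩) ⟨?_, ?_⟩
    · apply Subtype.ext
      show Projectivization.mk F ((c : F) • P.1.rep) _ = P.1
      conv_rhs => rw [← Projectivization.mk_rep P.1]
      exact (Projectivization.mk_eq_mk_iff F _ _ _ hrep).2 ⟨c, by rw [Units.smul_def]⟩
    · intro c c' h
      have h2 : (c : F) • P.1.rep = (c' : F) • P.1.rep :=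
        congrArg (fun t => t.1.1) h
      exact Units.ext (smul_left_injective F hrep h2)
    · rintro ⟨t, ht⟩
      have hmk : Projectivization.mk F t.1 t.2.1 = P.1 := congrArg Subtype.val ht
      rw [← Projectivization.mk_rep P.1] at hmk
      obtain ⟨a, ha⟩ := (Projectivization.mk_eq_mk_iff F _ _ t.2.1 hrep).1 hmk
      refine ⟨a, ?_⟩
      apply Subtype.ext
      apply Subtype.ext
      show (a : F) • P.1.rep = t.1
      rw [← Units.smul_def]
      exact ha
  -- hence `Nat.card T = Nat.card S * (q - 1)`
  have e : T ≃ S × Fˣ :=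
    (Equiv.sigmaFiberEquiv f).symm.trans
      ((Equiv.sigmaCongrRight fun P => (fib P).symm).trans (Equiv.sigmaEquivProd S Fˣ))
  have hTcard : Nat.card T = Nat.card S * (Fintype.card F - 1) := by
    rw [Nat.card_congr e, Nat.card_prod]
    congr 1
    rw [Nat.card_eq_fintype_card, Fintype.card_units]
  -- and `Nat.card T + 1` is the number of isotropic vectors
  have hZ : Nat.card T + 1 = Fintype.card {v : Fin (n + 1) → F // Qn F n α v = 0} := by
    rw [Nat.card_eq_fintype_card, Fintype.card_subtype, Fintype.card_subtype]
    have hfe : Finset.univ.filter (fun v : Fin (n + 1) → F => v ≠ 0 ∧ Qn F n α v = 0)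
        = (Finset.univ.filter (fun v : Fin (n + 1) → F => Qn F n α v = 0)).erase 0 := by
      ext v
      simp [Finset.mem_erase, and_comm]
    rw [hfe]
    apply Finset.card_erase_add_one
    simp [Qn]
  rw [← hZ, hTcard]

end Stmt3Aux

/-- For `n` odd and `α` a non-square, the number of isotropic points of `PG(n,q)`
is `q^{n-1} + ⋯ + q + 1 - q^{(n-1)/2}`. -/
theorem stmt3 (F : Type) [Field F] [Fintype F] (q n : ℕ)
    (hq : Fintype.card F = q) (hodd : Odd q) (hn : Odd n)
    (α : F) (hα : ¬ IsSquare α) :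
    Nat.card {P : Projectivization F (Fin (n + 1) → F) // Qn F n α P.rep = 0} =
      (∑ i ∈ Finset.range n, q ^ i) - q ^ ((n - 1) / 2) := by
  classical
  subst hq
  obtain ⟨k, hk⟩ := hn
  subst hk
  set q := Fintype.card F with hq
  have hq2 : 2 ≤ q := Fintype.one_lt_card
  have h2 : (2 : F) ≠ 0 := Stmt3Aux.two_ne_zero' hodd
  have hZ := Stmt3Aux.Zcount h2 hα k
  have hP := Stmt3Aux.card_proj (2 * k + 1) α
  have hgeom := Stmt3Aux.geom_aux q (by omega) (2 * k + 1)
  have hk2 : (2 * k + 1 - 1) / 2 = k := by omega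
  rw [hk2]
  have hs : q ^ k ≤ ∑ i ∈ Finset.range (2 * k + 1), q ^ i :=
    Finset.single_le_sum (f := fun i => q ^ i) (fun i _ => Nat.zero_le _)
      (Finset.mem_range.mpr (by omega))
  set a := Nat.card {P : Projectivization F (Fin (2 * k + 1 + 1) → F) //
      Qn F (2 * k + 1) α P.rep = 0} with ha
  set Z := Fintype.card {v : Fin (2 * k + 1 + 1) → F // Qn F (2 * k + 1) α v = 0} with hZdef
  set s := ∑ i ∈ Finset.range (2 * k + 1), q ^ i with hsdef
  -- now pure arithmetic
  zify [hs, show 1 ≤ q from by omega, show 1 ≤ Fintype.card F from by omega] at hP hgeom ⊢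
  zify at hZ
  have hfac : ((a : ℤ) + (q : ℤ) ^ k - (s : ℤ)) * ((q : ℤ) - 1) = 0 := by
    push_cast at hP hgeom hZ ⊢
    linear_combination hP - hgeom + hZ
  rcases mul_eq_zero.mp hfac with h | h
  · have : (a : ℤ) + (q : ℤ) ^ k = (s : ℤ) := by linarith
    push_cast
    linarith [this]
  · exfalso
    have : (2 : ℤ) ≤ (q : ℤ) := by exact_mod_cast hq2
    linarith
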